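/- Let V = ℝ ⊕ W where W is a 7-dimensional real inner product space with inner product g and a cross product × satisfying g(α×β, γ) totally antisymmetric and α×β orthogonal to α and β with |α×β|² = |α|²|β|² - g(α,β)² (a vector cross product). Define on V the product (a,α)·(b,β) := (ab - g(α,β), aβ + bα + α×β) and the quadratic form q(a,α) := a² + g(α,α). Then q is multiplicative: q(X·Y) = q(X)q(Y) for all X, Y ∈ V, so V is a composition algebra of dimension 8. -/

import Mathlib

/-- if a 7-dimensional real inner product space `W` carries a
vector cross product, then `V = ℝ ⊕ W` with product
`(a,α)·(b,β) = (ab - g(α,β), aβ + bα + α×β)` and quadratic form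
`q(a,α) = a² + g(α,α)` satisfies `q(X·Y) = q(X)q(Y)`. -/
theorem stmt_14 (W : Type*) [NormedAddCommGroup W] [InnerProductSpace ℝ W]
    (hdim : Module.finrank ℝ W = 7)
    (cross : W →ₗ[ℝ] W →ₗ[ℝ] W)
    (h1 : ∀ α β : W, (inner ℝ (cross α β) α : ℝ) = 0)
    (h2 : ∀ α β : W, (inner ℝ (cross α β) β : ℝ) = 0)
    (h3 : ∀ α β γ : W, (inner ℝ (cross α β) γ : ℝ) = -(inner ℝ (cross β α) γ : ℝ))
    (h4 : ∀ α β : W, (inner ℝ (cross α β) (cross α β) : ℝ) =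
        (inner ℝ α α : ℝ) * (inner ℝ β β : ℝ) - (inner ℝ α β : ℝ) ^ 2) :
    ∀ (a b : ℝ) (α β : W),
      (a * b - (inner ℝ α β : ℝ)) ^ 2 +
          (inner ℝ (a • β + b • α + cross α β) (a • β + b • α + cross α β) : ℝ) =
        (a ^ 2 + (inner ℝ α α : ℝ)) * (b ^ 2 + (inner ℝ β β : ℝ)) := by
  intro a b α β
  have e1 : (inner ℝ β (cross α β) : ℝ) = 0 := by rw [real_inner_comm]; exact h2 α β
  have e2 : (inner ℝ α (cross α β) : ℝ) = 0 := by rw [real_inner_comm]; exact h1 α β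
  simp only [inner_add_add_self, real_inner_smul_left, real_inner_smul_right,
    inner_add_left, inner_add_right, h4, e1, e2, h1, h2, real_inner_comm β α]
  ring
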